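/- Let g_1, …, g_ℓ (ℓ ≥ 2) be tropical monomial functions on ℝ^m with pairwise distinct exponents, let h_1, …, h_k be tropical monomial functions, and suppose a ∈ ℝ^m satisfies g_1(a) = g_2(a) = ⋯ = g_ℓ(a) > h_i(a) for all 1 ≤ i ≤ k. Then there exist a' ∈ ℝ^m and an index j with 1 < j ≤ ℓ such that g_j(a') > g_i(a') for all i ≠ j and g_j(a') > h_i(a') for all 1 ≤ i ≤ k. -/

import Mathlib

/-- `tropMonomial α n x = α + ⟨n, x⟩` is the tropical monomial function on `ℝ^m`
with coefficient `α ∈ ℝ` and exponent `n ∈ ℕ^m`. -/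
def tropMonomial {m : ℕ} (α : ℝ) (n : Fin m → ℕ) (x : Fin m → ℝ) : ℝ :=
  α + ∑ k, (n k : ℝ) * x k

lemma sum_digits_split (B : ℕ) {m : ℕ} (f : Fin (m + 1) → ℕ) :
    ∑ k, f k * B ^ (k : ℕ) = f 0 + B * ∑ i : Fin m, f i.succ * B ^ (i : ℕ) := by
  rw [Fin.sum_univ_succ]
  simp only [Fin.val_zero, pow_zero, mul_one, Fin.val_succ, pow_succ, Finset.mul_sum]
  congr 1
  exact Finset.sum_congr rfl fun i _ => by ring

lemma sum_digits_inj (B : ℕ) : ∀ {m : ℕ} (d e : Fin m → ℕ), (∀ k, d k < B) → (∀ k, e k < B) →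
    ∑ k, d k * B ^ (k : ℕ) = ∑ k, e k * B ^ (k : ℕ) → d = e := by
  intro m
  induction m with
  | zero => intro d e _ _ _; funext k; exact k.elim0
  | succ m ih =>
    intro d e hd he h
    rw [sum_digits_split, sum_digits_split] at h
    have hB : 0 < B := lt_of_le_of_lt (Nat.zero_le _) (hd 0)
    have h0 : d 0 = e 0 := by
      have := congrArg (· % B) h
      simpa [Nat.add_mul_mod_self_left, Nat.mod_eq_of_lt (hd 0), Nat.mod_eq_of_lt (he 0)]
        using this
    have hS : (∑ i : Fin m, d i.succ * B ^ (i : ℕ)) = ∑ i : Fin m, e i.succ * B ^ (i : ℕ) := by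
      have h' : B * ∑ i : Fin m, d i.succ * B ^ (i : ℕ)
          = B * ∑ i : Fin m, e i.succ * B ^ (i : ℕ) := by omega
      exact Nat.eq_of_mul_eq_mul_left hB h'
    have htail := ih (fun i => d i.succ) (fun i => e i.succ) (fun i => hd _) (fun i => he _) hS
    funext x
    cases x using Fin.cases with
    | zero => exact h0
    | succ i => exact congrFun htail i

lemma trop_shift {m : ℕ} (γ : ℝ) (q : Fin m → ℕ) (a v : Fin m → ℝ) (t : ℝ) :
    tropMonomial γ q (fun x => a x + t * v x)
      = tropMonomial γ q a + t * ∑ k, (q k : ℝ) * v k := by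
  have : ∀ x : Fin m, (q x : ℝ) * (a x + t * v x) = q x * a x + t * ((q x : ℝ) * v x) :=
    fun x => by ring
  simp only [tropMonomial, this, Finset.sum_add_distrib, ← Finset.mul_sum]
  ring

/-- If tropical monomials `g 0, …, g (ℓ-1)` (`ℓ = L + 2 ≥ 2`, pairwise distinct exponents)
all take the same value at `a`, strictly exceeding the values of the monomials
`h 1, …, h k` there, then there are a point `a'` and an index `j ≠ 0` at which `g j`
strictly dominates all the other `g i` and all the `h i`. -/
theorem stmt15 {m L k : ℕ}
    (α : Fin (L + 2) → ℝ) (n : Fin (L + 2) → Fin m → ℕ)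
    (hdistinct : Function.Injective n)
    (β : Fin k → ℝ) (p : Fin k → Fin m → ℕ)
    (a : Fin m → ℝ)
    (heq : ∀ i : Fin (L + 2), tropMonomial (α i) (n i) a = tropMonomial (α 0) (n 0) a)
    (hgt : ∀ i : Fin k, tropMonomial (β i) (p i) a < tropMonomial (α 0) (n 0) a) :
    ∃ (a' : Fin m → ℝ) (j : Fin (L + 2)), j ≠ 0 ∧
      (∀ i : Fin (L + 2), i ≠ j →
        tropMonomial (α i) (n i) a' < tropMonomial (α j) (n j) a') ∧
      (∀ i : Fin k,
        tropMonomial (β i) (p i) a' < tropMonomial (α j) (n j) a') := by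
  classical
  -- a base large enough to make the "digit" encoding injective
  set B : ℕ := (Finset.univ.sup fun i : Fin (L + 2) => Finset.univ.sup fun x : Fin m => n i x) + 1
    with hBdef
  have hBbig : ∀ i x, n i x < B := by
    intro i x
    have h1 : n i x ≤ Finset.univ.sup fun x : Fin m => n i x :=
      Finset.le_sup (Finset.mem_univ x)
    have h2 : (Finset.univ.sup fun x : Fin m => n i x)
        ≤ Finset.univ.sup fun i : Fin (L + 2) => Finset.univ.sup fun x : Fin m => n i x :=
      Finset.le_sup (f := fun i : Fin (L + 2) => Finset.univ.sup fun x : Fin m => n i x)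
        (Finset.mem_univ i)
    omega
  set f : Fin (L + 2) → ℕ := fun i => ∑ x, n i x * B ^ (x : ℕ) with hfdef
  have hfinj : Function.Injective f := by
    intro i j hij
    exact hdistinct (sum_digits_inj B (n i) (n j) (hBbig i) (hBbig j) hij)
  -- pick a maximizer and a minimizer of f
  obtain ⟨i₀, -, hi₀⟩ := Finset.exists_max_image Finset.univ f ⟨0, Finset.mem_univ 0⟩
  obtain ⟨i₁, -, hi₁⟩ := Finset.exists_min_image Finset.univ f ⟨0, Finset.mem_univ 0⟩
  have h01 : (0 : Fin (L + 2)) ≠ 1 := by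
    intro h
    have := congrArg Fin.val h
    simp at this
  have hne : i₀ ≠ i₁ := by
    intro h
    have e0 : f 0 = f i₀ :=
      le_antisymm (hi₀ 0 (Finset.mem_univ 0)) (h ▸ hi₁ 0 (Finset.mem_univ 0))
    have e1 : f 1 = f i₀ :=
      le_antisymm (hi₀ 1 (Finset.mem_univ 1)) (h ▸ hi₁ 1 (Finset.mem_univ 1))
    exact h01 (hfinj (e0.trans e1.symm))
  -- choose a direction and a winning index
  obtain ⟨v, j, hj0, hjlt⟩ :
      ∃ (v : Fin m → ℝ) (j : Fin (L + 2)), j ≠ 0 ∧ ∀ i, i ≠ j →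
        (∑ x, (n i x : ℝ) * v x) < ∑ x, (n j x : ℝ) * v x := by
    by_cases h0 : i₀ = 0
    · refine ⟨fun x => -(B : ℝ) ^ (x : ℕ), i₁, fun h => hne (h0.trans h.symm), fun i hij => ?_⟩
      have hlt : f i₁ < f i :=
        lt_of_le_of_ne (hi₁ i (Finset.mem_univ i)) (fun h => hij (hfinj h.symm))
      have hcast : ∀ i', (∑ x, (n i' x : ℝ) * (-(B : ℝ) ^ (x : ℕ))) = -(f i' : ℝ) := by
        intro i'
        rw [hfdef]
        push_cast
        simp [Finset.sum_neg_distrib]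
      rw [hcast, hcast]
      exact neg_lt_neg (by exact_mod_cast hlt)
    · refine ⟨fun x => (B : ℝ) ^ (x : ℕ), i₀, h0, fun i hij => ?_⟩
      have hlt : f i < f i₀ :=
        lt_of_le_of_ne (hi₀ i (Finset.mem_univ i)) (fun h => hij (hfinj h))
      have hcast : ∀ i', (∑ x, (n i' x : ℝ) * ((B : ℝ) ^ (x : ℕ))) = (f i' : ℝ) := by
        intro i'
        rw [hfdef]
        push_cast
        ring_nf
        exact Finset.sum_congr rfl fun x _ => mul_comm _ _
      rw [hcast, hcast]
      exact_mod_cast hlt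
  -- choose a small positive step
  set c : ℝ := ∑ x, (n j x : ℝ) * v x with hcdef
  have hev : ∀ᶠ t in nhdsWithin (0 : ℝ) (Set.Ioi 0), ∀ i : Fin k,
      t * ((∑ x, (p i x : ℝ) * v x) - c)
        < tropMonomial (α 0) (n 0) a - tropMonomial (β i) (p i) a := by
    rw [Filter.eventually_all]
    intro i
    have htend : Filter.Tendsto (fun t : ℝ => t * ((∑ x, (p i x : ℝ) * v x) - c))
        (nhdsWithin (0 : ℝ) (Set.Ioi 0)) (nhds 0) := by
      have : Filter.Tendsto (fun t : ℝ => t * ((∑ x, (p i x : ℝ) * v x) - c))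
          (nhds 0) (nhds (0 * ((∑ x, (p i x : ℝ) * v x) - c))) :=
        (continuous_id.mul continuous_const).tendsto 0
      simpa using this.mono_left nhdsWithin_le_nhds
    exact htend.eventually_lt_const (by linarith [hgt i])
  obtain ⟨t, hts, htpos⟩ := (hev.and self_mem_nhdsWithin).exists
  refine ⟨fun x => a x + t * v x, j, hj0, ?_, ?_⟩
  · intro i hij
    rw [trop_shift, trop_shift, heq i, heq j]
    have := hjlt i hij
    have ht : (0 : ℝ) < t := htpos
    nlinarith [hjlt i hij]
  · intro i
    rw [trop_shift, trop_shift, heq j]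
    have := hts i
    linarith
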